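/- Let the 2×2 matrix M = M_{[w]} correspond to a word w = w_0 ... w_{n−1} whose reduced word w_1...w_{n−1} is a palindrome, and suppose the parameters satisfy C = 0 (where C = Q_{k+1} − Q_k for n = 2k+1 odd, or C = Q_{k+1} − Q_{k−1} for n = 2k even). Then M ≡ [[−1, 0], [w_0 − Q_{n−2}(w_2,...,w_{n−2}), −1]], i.e., M is lower triangular with both diagonal entries equal to −1. -/
import Mathlib

open Matrix

/-- The companion-type matrix `M_x = [[x, -1], [1, 0]]`. -/
def Mx (x : ℝ) : Matrix (Fin 2) (Fin 2) ℝ := !![x, -1; 1, 0]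

/-- `Mword w n = M_{w_{n-1}} ⋯ M_{w_1} M_{w_0}` (rightmost factor first). -/
def Mword (w : ℕ → ℝ) : ℕ → Matrix (Fin 2) (Fin 2) ℝ
  | 0 => 1
  | (t+1) => Mx (w t) * Mword w t

/-- The signed continuant polynomials of the reduced word:
`contQ w t = Q_t(w_1,…,w_{t-1})`, with `Q_0 = 0`, `Q_1 = 1`,
`Q_{t+1} = w_t Q_t - Q_{t-1}`. -/
def contQ (w : ℕ → ℝ) : ℕ → ℝ
  | 0 => 0
  | 1 => 1
  | (t+2) => w (t+1) * contQ w (t+1) - contQ w t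

/-- The diagonal sign matrix used to relate reversed products to transposes. -/
def Dm : Matrix (Fin 2) (Fin 2) ℝ := !![1, 0; 0, -1]

lemma Mword_congr (u w : ℕ → ℝ) (n : ℕ) (h : ∀ i < n, u i = w i) :
    Mword u n = Mword w n := by
  induction n with
  | zero => rfl
  | succ t ih =>
      simp only [Mword, h t (Nat.lt_succ_self t),
        ih (fun i hi => h i (hi.trans (Nat.lt_succ_self t)))]

lemma Mword_add (w : ℕ → ℝ) (a b : ℕ) :
    Mword w (a + b) = Mword (fun i => w (i + b)) a * Mword w b := by
  induction a with
  | zero => simp [Mword]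
  | succ t ih =>
      rw [show t + 1 + b = (t + b) + 1 from by omega]
      simp only [Mword]
      rw [ih, mul_assoc]

lemma transpose_fin2 (a b c d : ℝ) : (!![a, b; c, d])ᵀ = !![a, c; b, d] := by
  ext i j
  fin_cases i <;> fin_cases j <;> rfl

lemma Dm_mul_Dm : Dm * Dm = 1 := by
  simp [Dm, Matrix.mul_fin_two, Matrix.one_fin_two]

lemma Dm_Dm_cancel (y : Matrix (Fin 2) (Fin 2) ℝ) : Dm * (Dm * y) = y := by
  rw [← mul_assoc, Dm_mul_Dm, one_mul]

lemma Dm_conj_Mx (x : ℝ) : Dm * (Mx x)ᵀ * Dm = Mx x := by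
  rw [Mx, transpose_fin2, Dm]
  simp [Matrix.mul_fin_two]

lemma Mword_rev (w : ℕ → ℝ) (n : ℕ) :
    Mword (fun i => w (n - 1 - i)) n = Dm * (Mword w n)ᵀ * Dm := by
  induction n with
  | zero =>
      show (1 : Matrix (Fin 2) (Fin 2) ℝ) = Dm * (1 : Matrix (Fin 2) (Fin 2) ℝ)ᵀ * Dm
      rw [Matrix.transpose_one, mul_one, Dm_mul_Dm]
  | succ n ih =>
      have h1 : Mword (fun i => w (n + 1 - 1 - i)) (n + 1)
          = Mword (fun i => w (n - 1 - i)) n * Mx (w n) := by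
        rw [Mword_add _ n 1]
        congr 1
        · exact Mword_congr _ _ n (fun i hi => by show w _ = w _; congr 1; omega)
        · show Mx (w (n + 1 - 1 - 0)) * (1 : Matrix (Fin 2) (Fin 2) ℝ) = Mx (w n)
          norm_num
      rw [h1, ih]
      show _ = Dm * (Mx (w n) * Mword w n)ᵀ * Dm
      rw [Matrix.transpose_mul]
      have h2 : Dm * ((Mword w n)ᵀ * (Mx (w n))ᵀ) * Dm
          = Dm * (Mword w n)ᵀ * Dm * (Dm * (Mx (w n))ᵀ * Dm) := by
        simp only [mul_assoc, Dm_Dm_cancel]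
      rw [h2, Dm_conj_Mx]

lemma det_Mword (w : ℕ → ℝ) (n : ℕ) : (Mword w n).det = 1 := by
  induction n with
  | zero => simp [Mword]
  | succ t ih =>
      show (Mx (w t) * Mword w t).det = 1
      rw [Matrix.det_mul, ih, mul_one]
      simp [Mx, Matrix.det_fin_two_of]

lemma A_eq (w : ℕ → ℝ) (t : ℕ) :
    Mword (fun i => w (i + 1)) (t + 1) =
      !![contQ w (t + 2), -contQ (fun i => w (i + 1)) (t + 1);
         contQ w (t + 1), -contQ (fun i => w (i + 1)) t] := by
  induction t with
  | zero =>
      show Mx (w 1) * 1 = _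
      rw [mul_one]
      have h2 : contQ w 2 = w 1 := by show w 1 * contQ w 1 - contQ w 0 = w 1; simp [contQ]
      have h1 : contQ w 1 = 1 := rfl
      have hv1 : contQ (fun i => w (i + 1)) 1 = 1 := rfl
      have hv0 : contQ (fun i => w (i + 1)) 0 = 0 := rfl
      rw [h2, h1, hv1, hv0, Mx]
      norm_num
  | succ t ih =>
      show Mx (w (t + 2)) * Mword (fun i => w (i + 1)) (t + 1) = _
      rw [ih]
      have hQ : contQ w (t + 3) = w (t + 2) * contQ w (t + 2) - contQ w (t + 1) := rfl
      have hT : contQ (fun i => w (i + 1)) (t + 2)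
          = w (t + 2) * contQ (fun i => w (i + 1)) (t + 1) - contQ (fun i => w (i + 1)) t := rfl
      rw [hQ, hT, Mx, Matrix.mul_fin_two]
      ext i j
      fin_cases i <;> fin_cases j <;> simp <;> ring

lemma conj_prod (p q r s : ℝ) :
    Dm * (!![p, q; r, s])ᵀ * Dm * !![p, q; r, s] =
    !![p * p - r * r, p * q - r * s; s * r - q * p, s * s - q * q] := by
  rw [transpose_fin2, Dm, Matrix.mul_fin_two, Matrix.mul_fin_two, Matrix.mul_fin_two]
  ext i j
  fin_cases i <;> fin_cases j <;> simp <;> ring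

lemma conj_prod_mid (x p q r s : ℝ) :
    Dm * (!![p, q; r, s])ᵀ * Dm * (Mx x * !![p, q; r, s]) =
    !![p * (x * p - r) - r * p, p * (x * q - s) - r * q;
       s * p - q * (x * p - r), s * q - q * (x * q - s)] := by
  rw [transpose_fin2, Dm, Mx, Matrix.mul_fin_two, Matrix.mul_fin_two, Matrix.mul_fin_two,
    Matrix.mul_fin_two]
  ext i j
  fin_cases i <;> fin_cases j <;> simp <;> ring

lemma key_odd (w : ℕ → ℝ) (j : ℕ)
    (hpal : ∀ i, 1 ≤ i → i ≤ 2 * j + 2 → w i = w (2 * j + 3 - i))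
    (hC : contQ w (j + 2) - contQ w (j + 1) = 0) :
    contQ w (2 * j + 3) = 0 ∧ contQ w (2 * j + 2) = 1 := by
  have hsplit : Mword (fun i => w (i + 1)) (2 * j + 2)
      = Mword (fun i => w (i + (j + 1) + 1)) (j + 1)
        * Mword (fun i => w (i + 1)) (j + 1) := by
    rw [show 2 * j + 2 = (j + 1) + (j + 1) from by omega]
    exact Mword_add _ (j + 1) (j + 1)
  have hrev2 : Mword (fun i => w (i + (j + 1) + 1)) (j + 1)
      = Dm * (Mword (fun i => w (i + 1)) (j + 1))ᵀ * Dm := by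
    rw [← Mword_rev (fun i => w (i + 1)) (j + 1)]
    apply Mword_congr
    intro i hi
    show w (i + (j + 1) + 1) = w (j + 1 - 1 - i + 1)
    rw [show i + (j + 1) + 1 = i + j + 2 from by omega,
        show j + 1 - 1 - i + 1 = 2 * j + 3 - (i + j + 2) from by omega]
    exact hpal _ (by omega) (by omega)
  have hA := A_eq w j
  have hdet : contQ w (j + 2) * (-contQ (fun i => w (i + 1)) j)
      - (-contQ (fun i => w (i + 1)) (j + 1)) * contQ w (j + 1) = 1 := by
    have h := det_Mword (fun i => w (i + 1)) (j + 1)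
    rw [hA, Matrix.det_fin_two_of] at h
    exact h
  have hB : Mword (fun i => w (i + 1)) (2 * j + 2)
      = !![contQ w (2 * j + 3), -contQ (fun i => w (i + 1)) (2 * j + 2);
           contQ w (2 * j + 2), -contQ (fun i => w (i + 1)) (2 * j + 1)] := by
    have h := A_eq w (2 * j + 1)
    simp only [show 2 * j + 1 + 1 = 2 * j + 2 from by omega,
      show 2 * j + 1 + 2 = 2 * j + 3 from by omega] at h
    exact h
  have main : (!![contQ w (2 * j + 3), -contQ (fun i => w (i + 1)) (2 * j + 2);
           contQ w (2 * j + 2), -contQ (fun i => w (i + 1)) (2 * j + 1)] :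
        Matrix (Fin 2) (Fin 2) ℝ)
      = !![contQ w (j + 2) * contQ w (j + 2) - contQ w (j + 1) * contQ w (j + 1),
           contQ w (j + 2) * (-contQ (fun i => w (i + 1)) (j + 1))
             - contQ w (j + 1) * (-contQ (fun i => w (i + 1)) j);
           (-contQ (fun i => w (i + 1)) j) * contQ w (j + 1)
             - (-contQ (fun i => w (i + 1)) (j + 1)) * contQ w (j + 2),
           (-contQ (fun i => w (i + 1)) j) * (-contQ (fun i => w (i + 1)) j)
             - (-contQ (fun i => w (i + 1)) (j + 1)) * (-contQ (fun i => w (i + 1)) (j + 1))] := by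
    rw [← hB, hsplit, hrev2, hA, conj_prod]
  have e00 : contQ w (2 * j + 3)
      = contQ w (j + 2) * contQ w (j + 2) - contQ w (j + 1) * contQ w (j + 1) := by
    have h := congrFun (congrFun main 0) 0
    simpa using h
  have e10 : contQ w (2 * j + 2)
      = (-contQ (fun i => w (i + 1)) j) * contQ w (j + 1)
        - (-contQ (fun i => w (i + 1)) (j + 1)) * contQ w (j + 2) := by
    have h := congrFun (congrFun main 1) 0
    simpa using h
  constructor
  · linear_combination e00 + (contQ w (j + 2) + contQ w (j + 1)) * hC
  · linear_combination e10 + hdet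
      - (-contQ (fun i => w (i + 1)) j + -contQ (fun i => w (i + 1)) (j + 1)) * hC

lemma key_even (w : ℕ → ℝ) (j : ℕ)
    (hpal : ∀ i, 1 ≤ i → i ≤ 2 * j + 3 → w i = w (2 * j + 4 - i))
    (hC : contQ w (j + 3) - contQ w (j + 1) = 0) :
    contQ w (2 * j + 4) = 0 ∧ contQ w (2 * j + 3) = 1 := by
  have hsplit : Mword (fun i => w (i + 1)) (2 * j + 3)
      = Mword (fun i => w (i + (j + 2) + 1)) (j + 1)
        * Mword (fun i => w (i + 1)) (j + 2) := by
    rw [show 2 * j + 3 = (j + 1) + (j + 2) from by omega]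
    exact Mword_add _ (j + 1) (j + 2)
  have hrev2 : Mword (fun i => w (i + (j + 2) + 1)) (j + 1)
      = Dm * (Mword (fun i => w (i + 1)) (j + 1))ᵀ * Dm := by
    rw [← Mword_rev (fun i => w (i + 1)) (j + 1)]
    apply Mword_congr
    intro i hi
    show w (i + (j + 2) + 1) = w (j + 1 - 1 - i + 1)
    rw [show i + (j + 2) + 1 = i + j + 3 from by omega,
        show j + 1 - 1 - i + 1 = 2 * j + 4 - (i + j + 3) from by omega]
    exact hpal _ (by omega) (by omega)
  have hmid : Mword (fun i => w (i + 1)) (j + 2)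
      = Mx (w (j + 2)) * Mword (fun i => w (i + 1)) (j + 1) := rfl
  have hA := A_eq w j
  have hdet : contQ w (j + 2) * (-contQ (fun i => w (i + 1)) j)
      - (-contQ (fun i => w (i + 1)) (j + 1)) * contQ w (j + 1) = 1 := by
    have h := det_Mword (fun i => w (i + 1)) (j + 1)
    rw [hA, Matrix.det_fin_two_of] at h
    exact h
  have hB : Mword (fun i => w (i + 1)) (2 * j + 3)
      = !![contQ w (2 * j + 4), -contQ (fun i => w (i + 1)) (2 * j + 3);
           contQ w (2 * j + 3), -contQ (fun i => w (i + 1)) (2 * j + 2)] := by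
    have h := A_eq w (2 * j + 2)
    simp only [show 2 * j + 2 + 1 = 2 * j + 3 from by omega,
      show 2 * j + 2 + 2 = 2 * j + 4 from by omega] at h
    exact h
  have main : (!![contQ w (2 * j + 4), -contQ (fun i => w (i + 1)) (2 * j + 3);
           contQ w (2 * j + 3), -contQ (fun i => w (i + 1)) (2 * j + 2)] :
        Matrix (Fin 2) (Fin 2) ℝ)
      = !![contQ w (j + 2) * (w (j + 2) * contQ w (j + 2) - contQ w (j + 1))
             - contQ w (j + 1) * contQ w (j + 2),
           contQ w (j + 2) * (w (j + 2) * (-contQ (fun i => w (i + 1)) (j + 1))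
               - (-contQ (fun i => w (i + 1)) j))
             - contQ w (j + 1) * (-contQ (fun i => w (i + 1)) (j + 1));
           (-contQ (fun i => w (i + 1)) j) * contQ w (j + 2)
             - (-contQ (fun i => w (i + 1)) (j + 1))
               * (w (j + 2) * contQ w (j + 2) - contQ w (j + 1)),
           (-contQ (fun i => w (i + 1)) j) * (-contQ (fun i => w (i + 1)) (j + 1))
             - (-contQ (fun i => w (i + 1)) (j + 1))
               * (w (j + 2) * (-contQ (fun i => w (i + 1)) (j + 1))
                 - (-contQ (fun i => w (i + 1)) j))] := by
    rw [← hB, hsplit, hrev2, hmid, hA, conj_prod_mid]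
  have e00 : contQ w (2 * j + 4)
      = contQ w (j + 2) * (w (j + 2) * contQ w (j + 2) - contQ w (j + 1))
          - contQ w (j + 1) * contQ w (j + 2) := by
    have h := congrFun (congrFun main 0) 0
    simpa using h
  have e10 : contQ w (2 * j + 3)
      = (-contQ (fun i => w (i + 1)) j) * contQ w (j + 2)
          - (-contQ (fun i => w (i + 1)) (j + 1))
            * (w (j + 2) * contQ w (j + 2) - contQ w (j + 1)) := by
    have h := congrFun (congrFun main 1) 0
    simpa using h
  have hCx : w (j + 2) * contQ w (j + 2) - contQ w (j + 1) - contQ w (j + 1) = 0 := by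
    have h : contQ w (j + 3) = w (j + 2) * contQ w (j + 2) - contQ w (j + 1) := rfl
    linarith [hC, h]
  constructor
  · linear_combination e00 + contQ w (j + 2) * hCx
  · linear_combination e10 + hdet + contQ (fun i => w (i + 1)) (j + 1) * hCx

lemma final_step (w : ℕ → ℝ) (m : ℕ)
    (hQ0 : contQ w (m + 2) = 0) (hQ1 : contQ w (m + 1) = 1) :
    Mword w (m + 2) = !![-1, 0; w 0 - contQ (fun i => w (i + 1)) m, -1] := by
  have hsplit : Mword w (m + 2)
      = Mword (fun i => w (i + 1)) (m + 1) * Mword w 1 := Mword_add w (m + 1) 1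
  have hw1 : Mword w 1 = Mx (w 0) := by simp [Mword]
  have hA := A_eq w m
  have hdet : contQ w (m + 2) * (-contQ (fun i => w (i + 1)) m)
      - (-contQ (fun i => w (i + 1)) (m + 1)) * contQ w (m + 1) = 1 := by
    have h := det_Mword (fun i => w (i + 1)) (m + 1)
    rw [hA, Matrix.det_fin_two_of] at h
    exact h
  have hT : contQ (fun i => w (i + 1)) (m + 1) = 1 := by
    linear_combination hdet + contQ (fun i => w (i + 1)) m * hQ0
      - contQ (fun i => w (i + 1)) (m + 1) * hQ1
  rw [hsplit, hw1, hA, hQ0, hQ1, hT, Mx, Matrix.mul_fin_two]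
  ext i j
  fin_cases i <;> fin_cases j <;> simp <;> ring

/-- If the reduced word `w_1 … w_{n-1}` is a palindrome and the parameters lie on
the critical curve `C = 0` (`C = Q_{k+1} - Q_k` for `n = 2k+1` odd,
`C = Q_{k+1} - Q_{k-1}` for `n = 2k` even), then
`M_{[w]} = [[-1, 0], [w_0 - Q_{n-2}(w_2,…,w_{n-2}), -1]]`. -/
theorem Mword_on_critical_curve (w : ℕ → ℝ) (n k : ℕ) (hn2 : 2 ≤ n)
    (hparity : n = 2 * k + 1 ∨ (n = 2 * k ∧ 1 ≤ k))
    (hpal : ∀ i, 1 ≤ i → i ≤ n - 1 → w i = w (n - i))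
    (hCodd : n = 2 * k + 1 → contQ w (k + 1) - contQ w k = 0)
    (hCeven : n = 2 * k → contQ w (k + 1) - contQ w (k - 1) = 0) :
    Mword w n =
      !![-1, 0;
         w 0 - contQ (fun i => w (i + 1)) (n - 2), -1] := by
  obtain ⟨m, rfl⟩ : ∃ m, n = m + 2 := ⟨n - 2, by omega⟩
  rw [show m + 2 - 2 = m from by omega]
  rcases hparity with h | ⟨h, hk⟩
  · -- odd case
    have hk1 : 1 ≤ k := by omega
    obtain ⟨j, rfl⟩ : ∃ j, k = j + 1 := ⟨k - 1, by omega⟩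
    have hmj : m = 2 * j + 1 := by omega
    subst hmj
    have hC : contQ w (j + 2) - contQ w (j + 1) = 0 := hCodd h
    have hp : ∀ i, 1 ≤ i → i ≤ 2 * j + 2 → w i = w (2 * j + 3 - i) := by
      intro i h1 h2
      have hh := hpal i h1 (by omega)
      rw [hh, show 2 * j + 1 + 2 - i = 2 * j + 3 - i from by omega]
    obtain ⟨hQ0, hQ1⟩ := key_odd w j hp hC
    have h0 : contQ w (2 * j + 1 + 2) = 0 := by
      rw [show 2 * j + 1 + 2 = 2 * j + 3 from by omega]; exact hQ0
    have h1 : contQ w (2 * j + 1 + 1) = 1 := by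
      rw [show 2 * j + 1 + 1 = 2 * j + 2 from by omega]; exact hQ1
    exact final_step w (2 * j + 1) h0 h1
  · -- even case
    rcases Nat.lt_or_ge k 2 with hk2 | hk2
    · -- n = 2
      have hk1 : k = 1 := by omega
      subst hk1
      have hm0 : m = 0 := by omega
      subst hm0
      have hC := hCeven h
      have hQ0 : contQ w 2 = 0 := by
        have h0 : contQ w 0 = 0 := rfl
        have h1 : contQ w 1 = 1 := rfl
        linarith [hC]
      exact final_step w 0 hQ0 rfl
    · obtain ⟨j, rfl⟩ : ∃ j, k = j + 2 := ⟨k - 2, by omega⟩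
      have hmj : m = 2 * j + 2 := by omega
      subst hmj
      have hC : contQ w (j + 3) - contQ w (j + 1) = 0 := hCeven h
      have hp : ∀ i, 1 ≤ i → i ≤ 2 * j + 3 → w i = w (2 * j + 4 - i) := by
        intro i h1 h2
        have hh := hpal i h1 (by omega)
        rw [hh, show 2 * j + 2 + 2 - i = 2 * j + 4 - i from by omega]
      obtain ⟨hQ0, hQ1⟩ := key_even w j hp hC
      have h0 : contQ w (2 * j + 2 + 2) = 0 := by
        rw [show 2 * j + 2 + 2 = 2 * j + 4 from by omega]; exact hQ0
      have h1' : contQ w (2 * j + 2 + 1) = 1 := by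
        rw [show 2 * j + 2 + 1 = 2 * j + 3 from by omega]; exact hQ1
      exact final_step w (2 * j + 2) h0 h1'
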